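/- Suppose X, W are matrices with X symmetric, X ⪰ εI, X ⪯ ηI for 0 < ε ≤ η, and for a matrix pair (A, B) the block matrix [[X, XAᵀ + WᵀBᵀ],[AX + BW, X]] ⪰ εI. Set P = X⁻¹, K = W X⁻¹, A^cl = A + BK. Then the block matrix [[P, (A^cl)ᵀP],[PA^cl, P]] ⪰ (ε/η²) I. -/

import Mathlib

open Matrix
open scoped MatrixOrder

/-- Operator norm of a real matrix induced by the Euclidean (`l2`) norms. -/
noncomputable def opNorm {m n : Type*} [Fintype m] [Fintype n] [DecidableEq n]
    (M : Matrix m n ℝ) : ℝ :=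
  ‖LinearMap.toContinuousLinearMap (Matrix.toEuclideanLin M)‖

/-- Smallest eigenvalue of a (symmetric) real matrix. -/
noncomputable def lmin {n : Type*} [Fintype n] [DecidableEq n]
    (A : Matrix n n ℝ) : ℝ :=
  if h : A.IsHermitian then ⨅ i, h.eigenvalues i else 0

private lemma psd_smul {k : Type*} [Fintype k] {c : ℝ} {M : Matrix k k ℝ}
    (hc : 0 ≤ c) (hM : M.PosSemidef) : (c • M).PosSemidef := by
  refine ⟨?_, fun x => ?_⟩
  · unfold Matrix.IsHermitian
    rw [Matrix.conjTranspose_smul, hM.1]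
    simp
  · exact (hM.smul hc).2 x

private lemma psd_blockdiag {k l : Type*} [Fintype k] [Fintype l] [DecidableEq k] [DecidableEq l]
    {M : Matrix k k ℝ} {N : Matrix l l ℝ}
    (hM : M.PosSemidef) (hN : N.PosSemidef) :
    (Matrix.fromBlocks M 0 0 N).PosSemidef := by
  have h : Matrix.fromBlocks M 0 0 N =
      (Matrix.fromBlocks (CFC.sqrt M) 0 0 (CFC.sqrt N))ᴴ * (Matrix.fromBlocks (CFC.sqrt M) 0 0 (CFC.sqrt N)) := by
    rw [Matrix.fromBlocks_conjTranspose, Matrix.fromBlocks_multiply]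
    simp only [Matrix.conjTranspose_zero, Matrix.mul_zero, Matrix.zero_mul, add_zero, zero_add,
      (CFC.sqrt_nonneg M).posSemidef.1.eq, (CFC.sqrt_nonneg N).posSemidef.1.eq,
      CFC.sqrt_mul_sqrt_self M hM.nonneg, CFC.sqrt_mul_sqrt_self N hN.nonneg]
  rw [h]
  exact Matrix.posSemidef_conjTranspose_mul_self _

theorem stmt7 {n m : ℕ} (X : Matrix (Fin n) (Fin n) ℝ) (hX : X.IsHermitian)
    (W : Matrix (Fin m) (Fin n) ℝ) (A : Matrix (Fin n) (Fin n) ℝ)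
    (B : Matrix (Fin n) (Fin m) ℝ) (ε η : ℝ) (hε : 0 < ε) (hεη : ε ≤ η)
    (hXlo : (X - ε • (1 : Matrix (Fin n) (Fin n) ℝ)).PosSemidef)
    (hXhi : (η • (1 : Matrix (Fin n) (Fin n) ℝ) - X).PosSemidef)
    (hblk : (Matrix.fromBlocks X (X * Aᵀ + Wᵀ * Bᵀ) (A * X + B * W) X -
      ε • (1 : Matrix (Fin n ⊕ Fin n) (Fin n ⊕ Fin n) ℝ)).PosSemidef) :
    (Matrix.fromBlocks X⁻¹ ((A + B * (W * X⁻¹))ᵀ * X⁻¹)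
        (X⁻¹ * (A + B * (W * X⁻¹))) X⁻¹ -
      (ε / η ^ 2) • (1 : Matrix (Fin n ⊕ Fin n) (Fin n ⊕ Fin n) ℝ)).PosSemidef := by
  have hη : 0 < η := lt_of_lt_of_le hε hεη
  -- X is positive definite
  have hεI : ((ε • 1 : Matrix (Fin n) (Fin n) ℝ)).PosDef := by
    rw [Matrix.smul_one_eq_diagonal]
    exact Matrix.posDef_diagonal_iff.mpr fun _ => hε
  have hXpd : X.PosDef := by
    have := Matrix.PosDef.posSemidef_add hXlo hεI
    rwa [sub_add_cancel] at this
  have hdet : IsUnit X.det := hXpd.det_pos.ne'.isUnit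
  have hY2 : X * X⁻¹ = 1 := Matrix.mul_nonsing_inv X hdet
  have hY1 : X⁻¹ * X = 1 := Matrix.nonsing_inv_mul X hdet
  have hYe : (X⁻¹)ᴴ = X⁻¹ := (hX.inv).eq
  have hYt : (X⁻¹)ᵀ = X⁻¹ := by
    rw [← Matrix.conjTranspose_eq_transpose_of_trivial, hYe]
  obtain ⟨R, hRh, hRR⟩ : ∃ R : Matrix (Fin n) (Fin n) ℝ, Rᴴ = R ∧ R * R = X :=
    ⟨CFC.sqrt X, (CFC.sqrt_nonneg X).posSemidef.1.eq,
      CFC.sqrt_mul_sqrt_self X hXpd.posSemidef.nonneg⟩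
  -- replace X⁻¹ by an opaque Y
  generalize hgen : X⁻¹ = Y at hY1 hY2 hYe hYt ⊢
  -- applied versions of the key identities
  have hv1 : ∀ Z : Matrix (Fin n) (Fin n) ℝ, Y * (X * Z) = Z := fun Z => by
    rw [← Matrix.mul_assoc, hY1, Matrix.one_mul]
  have hv2 : ∀ Z : Matrix (Fin n) (Fin n) ℝ, X * (Y * Z) = Z := fun Z => by
    rw [← Matrix.mul_assoc, hY2, Matrix.one_mul]
  have hvR : ∀ Z : Matrix (Fin n) (Fin n) ℝ, R * (R * Z) = X * Z := fun Z => by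
    rw [← Matrix.mul_assoc, hRR]
  -- η • Y - 1 is PSD
  have hA1 : (η • Y - 1).PosSemidef := by
    have h := hXhi.mul_mul_conjTranspose_same (Y * R)
    have he : Y * R * (η • 1 - X) * (Y * R)ᴴ = η • Y - 1 := by
      rw [Matrix.conjTranspose_mul, hRh, hYe, Matrix.mul_sub, Matrix.sub_mul,
        Matrix.mul_smul, Matrix.mul_one, Matrix.smul_mul]
      congr 1
      · congr 1
        simp only [Matrix.mul_assoc]
        rw [hvR, hv1]
      · rw [← hRR]
        simp only [Matrix.mul_assoc]
        rw [hvR, hv1, hvR]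
        exact hY2
    rwa [he] at h
  -- η • Y² - Y is PSD
  have hA2 : (η • (Y * Y) - Y).PosSemidef := by
    have h := hXhi.mul_mul_conjTranspose_same Y
    have he : Y * (η • 1 - X) * Yᴴ = η • (Y * Y) - Y := by
      rw [hYe, Matrix.mul_sub, Matrix.sub_mul, Matrix.mul_smul, Matrix.mul_one,
        Matrix.smul_mul, Matrix.mul_assoc, hv1]
    rwa [he] at h
  -- Y² - η⁻² • 1 is PSD
  have hC : (Y * Y - (η ^ 2)⁻¹ • (1 : Matrix (Fin n) (Fin n) ℝ)).PosSemidef := by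
    have h := psd_smul (le_of_lt (inv_pos.mpr hη))
      (hA2.add (psd_smul (le_of_lt (inv_pos.mpr hη)) hA1))
    have he : η⁻¹ • (η • (Y * Y) - Y + η⁻¹ • (η • Y - 1)) =
        Y * Y - (η ^ 2)⁻¹ • (1 : Matrix (Fin n) (Fin n) ℝ) := by
      match_scalars <;> field_simp <;> ring
    rwa [he] at h
  -- the diagonal correction block
  set G : Matrix (Fin n) (Fin n) ℝ := ε • (Y * Y) - (ε / η ^ 2) • 1 with hGdef
  have hG : G.PosSemidef := by
    have h := psd_smul (le_of_lt hε) hC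
    have he : ε • (Y * Y - (η ^ 2)⁻¹ • (1 : Matrix (Fin n) (Fin n) ℝ)) = G := by
      rw [hGdef]
      match_scalars <;> ring
    rwa [he] at h
  -- conjugation of the block hypothesis
  set D : Matrix (Fin n ⊕ Fin n) (Fin n ⊕ Fin n) ℝ := Matrix.fromBlocks Y 0 0 Y with hDdef
  have hDh : Dᴴ = D := by
    rw [hDdef, Matrix.fromBlocks_conjTranspose, Matrix.conjTranspose_zero, hYe]
  set S : Matrix (Fin n ⊕ Fin n) (Fin n ⊕ Fin n) ℝ :=
    Matrix.fromBlocks X (X * Aᵀ + Wᵀ * Bᵀ) (A * X + B * W) X with hSdef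
  have h0 : (D * (S - ε • 1) * Dᴴ).PosSemidef := hblk.mul_mul_conjTranspose_same D
  -- the conjugated blocks
  have e11 : Y * X * Y = Y := by rw [hY1, Matrix.one_mul]
  have e12 : Y * (X * Aᵀ + Wᵀ * Bᵀ) * Y = (A + B * (W * Y))ᵀ * Y := by
    have ht : (A + B * (W * Y))ᵀ = Aᵀ + Y * (Wᵀ * Bᵀ) := by
      rw [Matrix.transpose_add, Matrix.transpose_mul, Matrix.transpose_mul, hYt,
        Matrix.mul_assoc]
    rw [ht, Matrix.mul_add, Matrix.add_mul, Matrix.add_mul]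
    congr 1
    rw [← Matrix.mul_assoc, hY1, Matrix.one_mul]
  have e21 : Y * (A * X + B * W) * Y = Y * (A + B * (W * Y)) := by
    rw [Matrix.mul_add, Matrix.add_mul, Matrix.mul_add]
    congr 1
    · rw [Matrix.mul_assoc, Matrix.mul_assoc, hY2, Matrix.mul_one]
    · simp only [Matrix.mul_assoc]
  have hDSD : D * S * D = Matrix.fromBlocks Y ((A + B * (W * Y))ᵀ * Y)
      (Y * (A + B * (W * Y))) Y := by
    rw [hDdef, hSdef, Matrix.fromBlocks_multiply, Matrix.fromBlocks_multiply]
    simp only [Matrix.zero_mul, Matrix.mul_zero, add_zero, zero_add]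
    rw [Matrix.fromBlocks_inj]
    exact ⟨e11, e12, e21, e11⟩
  have hDD : D * D = Matrix.fromBlocks (Y * Y) 0 0 (Y * Y) := by
    rw [hDdef, Matrix.fromBlocks_multiply]
    simp
  have hsplit : D * (S - ε • 1) * D = D * S * D - ε • (D * D) := by
    rw [Matrix.mul_sub, Matrix.sub_mul, Matrix.mul_smul, Matrix.mul_one, Matrix.smul_mul]
  have hGblk : ε • (D * D) - (ε / η ^ 2) • (1 : Matrix (Fin n ⊕ Fin n) (Fin n ⊕ Fin n) ℝ) =
      Matrix.fromBlocks G 0 0 G := by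
    rw [hDD, ← Matrix.fromBlocks_one, Matrix.fromBlocks_smul, Matrix.fromBlocks_smul, hGdef]
    ext (i | i) (j | j) <;>
      simp [Matrix.fromBlocks, Matrix.sub_apply]
  have final : Matrix.fromBlocks Y ((A + B * (W * Y))ᵀ * Y)
        (Y * (A + B * (W * Y))) Y -
      (ε / η ^ 2) • (1 : Matrix (Fin n ⊕ Fin n) (Fin n ⊕ Fin n) ℝ) =
      D * (S - ε • 1) * Dᴴ + Matrix.fromBlocks G 0 0 G := by
    rw [hDh, hsplit, hDSD, ← hGblk]
    abel
  rw [final]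
  exact h0.add (psd_blockdiag hG hG)
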